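/- arXiv:math/0011103 — 2 statements merged into one kernel-verified Lean document; each statement's English description precedes it below -/
import Mathlib

section
/- The orbifold Euler number χ(M, G) = (1/|G|) Σ_{g_1 g_2 = g_2 g_1} χ(M^{g_1,g_2}) equals Σ_{[g]} χ(M^g / Z(g)), the sum over conjugacy classes of G of the Euler numbers of the quotients of fixed-point sets by centralizers. -/
/-- The orbifold Euler number
`χ(M,G) = (1/|G|) Σ_{g₁g₂ = g₂g₁} χ(M^{g₁,g₂})` equals `Σ_{[g]} χ(M^g/Z(g))`, the sum
over conjugacy classes of `G` of the Euler numbers of the quotient of the fixed-point set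
by the centralizer; here `M` is a finite `G`-space (Euler characteristic = cardinality),
and `χ(M^g/Z(g))` is computed by Burnside's formula
`(1/|Z(g)|) Σ_{h ∈ Z(g)} χ(M^{g,h})`. -/
theorem orbifold_euler_number_eq_sum_over_classes
    (G : Type*) [Group G] [Fintype G] [DecidableEq G] [Fintype (ConjClasses G)]
    (M : Type*) [Fintype M] [MulAction G M]
    (rep : ConjClasses G → G) (hrep : ∀ c, ConjClasses.mk (rep c) = c) :
    (Fintype.card G : ℚ)⁻¹ *
      ∑ p : G × G, (if p.1 * p.2 = p.2 * p.1 then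
        (Nat.card {m : M // p.1 • m = m ∧ p.2 • m = m} : ℚ) else 0) =
    ∑ c : ConjClasses G,
      (Nat.card (Subgroup.centralizer {rep c} : Subgroup G) : ℚ)⁻¹ *
        ∑ h : G, (if h * rep c = rep c * h then
          (Nat.card {m : M // (rep c) • m = m ∧ h • m = m} : ℚ) else 0) := by
  classical
  set F : G → ℚ := fun g => ∑ h : G, (if h * g = g * h then
      (Nat.card {m : M // g • m = m ∧ h • m = m} : ℚ) else 0) with hF
  -- F is a class function
  have hconj : ∀ (k g : G), F (k * g * k⁻¹) = F g := by
    intro k g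
    have key : ∀ (a : G) (m : M), (k * a * k⁻¹) • m = m ↔ a • (k⁻¹ • m) = k⁻¹ • m := by
      intro a m
      rw [mul_smul, mul_smul]
      constructor
      · intro hh
        conv_rhs => rw [← hh]
        rw [inv_smul_smul]
      · intro hh
        rw [hh, smul_inv_smul]
    simp only [hF]
    have hbij : Function.Bijective (fun h : G => k * h * k⁻¹) := by
      constructor
      · intro a b hab
        simpa using hab
      · intro b
        exact ⟨k⁻¹ * b * k, by group⟩
    refine (Fintype.sum_bijective (fun h : G => k * h * k⁻¹) hbij _ _ fun h => ?_).symm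
    have hcond : (k * h * k⁻¹) * (k * g * k⁻¹) = (k * g * k⁻¹) * (k * h * k⁻¹)
        ↔ h * g = g * h := by
      constructor
      · intro hh
        have := congrArg (fun x => k⁻¹ * x * k) hh
        simpa [mul_assoc] using this
      · intro hh
        have := congrArg (fun x => k * x * k⁻¹) hh
        simpa [mul_assoc] using this
    have hcard : Nat.card {m : M // (k * g * k⁻¹) • m = m ∧ (k * h * k⁻¹) • m = m}
        = Nat.card {m : M // g • m = m ∧ h • m = m} := by
      apply Nat.card_congr
      refine Equiv.subtypeEquiv (MulAction.toPerm (k⁻¹ : G)) fun m => ?_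
      simp only [MulAction.toPerm_apply]
      rw [key g m, key h m]
    simp only [hcond, hcard]
  have hclass : ∀ (g g' : G), ConjClasses.mk g = ConjClasses.mk g' → F g = F g' := by
    intro g g' hgg'
    rw [ConjClasses.mk_eq_mk_iff_isConj, isConj_iff] at hgg'
    obtain ⟨k, hk⟩ := hgg'
    rw [← hk, hconj]
  -- cardinality relation: |class| * |centralizer| = |G|
  have hcard_class : ∀ c : ConjClasses G,
      (Fintype.card {g : G // ConjClasses.mk g = c}) *
        Nat.card (Subgroup.centralizer {rep c} : Subgroup G) = Fintype.card G := by
    intro c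
    have e1 : {g : G // ConjClasses.mk g = c} ≃ MulAction.orbit (ConjAct G) (rep c) := by
      have : MulAction.orbit (ConjAct G) (rep c) = (ConjClasses.mk (rep c)).carrier :=
        ConjAct.orbit_eq_carrier_conjClasses (rep c)
      rw [this, hrep c]
      exact Equiv.subtypeEquivRight fun g => (ConjClasses.mem_carrier_iff_mk_eq).symm
    have e2 : (Subgroup.centralizer {rep c} : Subgroup G) ≃
        MulAction.stabilizer (ConjAct G) (rep c) := by
      refine Equiv.subtypeEquiv ConjAct.toConjAct.toEquiv fun g => ?_
      rw [Subgroup.centralizer_eq_comap_stabilizer]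
      rfl
    have := MulAction.card_orbit_mul_card_stabilizer_eq_card_group (ConjAct G) (rep c)
    rw [Fintype.card_congr e1, Nat.card_eq_fintype_card, Fintype.card_congr e2, this]
    exact Fintype.card_congr ConjAct.toConjAct.toEquiv.symm
  -- rewrite LHS pair sum as sum over g of F g
  have hpairs : ∑ p : G × G, (if p.1 * p.2 = p.2 * p.1 then
      (Nat.card {m : M // p.1 • m = m ∧ p.2 • m = m} : ℚ) else 0) = ∑ g : G, F g := by
    rw [Fintype.sum_prod_type]
    refine Finset.sum_congr rfl fun g _ => Finset.sum_congr rfl fun h _ => ?_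
    simp only [hF, eq_comm]
  rw [hpairs]
  -- group the sum by conjugacy classes
  rw [← Fintype.sum_fiberwise (fun g => ConjClasses.mk g) F]
  rw [Finset.mul_sum]
  refine Finset.sum_congr rfl fun c _ => ?_
  have hsum : ∑ g : {g : G // ConjClasses.mk g = c}, F g
      = (Fintype.card {g : G // ConjClasses.mk g = c} : ℚ) * F (rep c) :=
    calc ∑ g : {g : G // ConjClasses.mk g = c}, F (g : G)
        = ∑ _g : {g : G // ConjClasses.mk g = c}, F (rep c) :=
          Finset.sum_congr rfl fun g _ => hclass (g : G) (rep c) (by rw [g.2, hrep c])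
      _ = _ := by simp [mul_comm]
  rw [hsum]
  have hZ : (Nat.card (Subgroup.centralizer {rep c} : Subgroup G) : ℚ) ≠ 0 := by
    simp [Nat.card_eq_fintype_card, Fintype.card_ne_zero]
  have hG : (Fintype.card G : ℚ) ≠ 0 := by
    simp [Fintype.card_ne_zero]
  have := hcard_class c
  have hq : ((Fintype.card {g : G // ConjClasses.mk g = c}) : ℚ) *
      (Nat.card (Subgroup.centralizer {rep c} : Subgroup G) : ℚ) = (Fintype.card G : ℚ) := by
    exact_mod_cast congrArg (fun n : ℕ => (n : ℚ)) this
  have hn : ((Fintype.card {g : G // ConjClasses.mk g = c}) : ℚ) ≠ 0 := by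
    have : Nonempty {g : G // ConjClasses.mk g = c} := ⟨⟨rep c, hrep c⟩⟩
    simp [Fintype.card_ne_zero]
  have main : ∀ (n z x : ℚ), n ≠ 0 → n * z = (Fintype.card G : ℚ) →
      (Fintype.card G : ℚ)⁻¹ * (n * x) = z⁻¹ * x := by
    intro n z x hn0 hnz
    rw [← hnz, mul_inv, mul_comm n⁻¹ z⁻¹, mul_assoc, ← mul_assoc n⁻¹ n x,
      inv_mul_cancel₀ hn0, one_mul]
  exact main _ _ _ hn hq
end

section
/- The ℂ-algebra of invariants ℂ[x_2,…,x_n,y_2,…,y_n]^{Γ_{n−1}} is generated by the polynomials Σ_{i=2}^n f(x_i, y_i) as f runs over a linear basis of the space of Γ-invariants ℂ[x,y]^Γ, where Γ ⊂ GL_2(ℂ) is a finite group acting diagonally and Γ_{n−1} = Γ^{n−1} ⋊ S_{n−1} acts on the n−1 pairs of variables. (For Γ trivial this is Weyl's theorem that symmetric polynomial invariants of S_{n-1} acting diagonally on (ℂ^2)^{n-1} are generated by polarized power sums.) -/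
open MvPolynomial

variable {Γ : Type} [Group Γ]

/-- The substitution action of `γ ∈ Γ ⊂ GL_2(ℂ)` on `ℂ[x,y]` (variables indexed by
`Fin 2`): each variable is replaced by the corresponding linear form. -/
noncomputable def actOne (ι : Γ →* Matrix.GeneralLinearGroup (Fin 2) ℂ) (γ : Γ) :
    MvPolynomial (Fin 2) ℂ →ₐ[ℂ] MvPolynomial (Fin 2) ℂ :=
  aeval fun v => ∑ w : Fin 2, ((ι γ : Matrix (Fin 2) (Fin 2) ℂ) v w) • (X w)

/-- The substitution action of the element `(g, s)` of the wreath product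
`Γ_m = Γ^m ⋊ S_m` on `ℂ[x_1,…,x_m,y_1,…,y_m]` (variables indexed by `Fin m × Fin 2`):
`Γ^m` acts factorwise via the inclusion `Γ ⊂ GL_2(ℂ)` and `S_m` permutes the pairs of
variables. -/
noncomputable def actWreath {m : ℕ} (ι : Γ →* Matrix.GeneralLinearGroup (Fin 2) ℂ)
    (g : Fin m → Γ) (s : Equiv.Perm (Fin m)) :
    MvPolynomial (Fin m × Fin 2) ℂ →ₐ[ℂ] MvPolynomial (Fin m × Fin 2) ℂ :=
  aeval fun p => ∑ w : Fin 2, ((ι (g p.1) : Matrix (Fin 2) (Fin 2) ℂ) p.2 w) • (X (s p.1, w))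

/-- The polarization `f(x,y) ↦ Σ_{i=1}^m f(x_i, y_i)`. -/
noncomputable def polarize {m : ℕ} (f : MvPolynomial (Fin 2) ℂ) :
    MvPolynomial (Fin m × Fin 2) ℂ :=
  ∑ i : Fin m, aeval (fun v => X (i, v)) f

noncomputable def psi {m : ℕ} (i : Fin m) :
    MvPolynomial (Fin 2) ℂ →ₐ[ℂ] MvPolynomial (Fin m × Fin 2) ℂ :=
  aeval fun v => X (i, v)

lemma polarize_eq {m : ℕ} (f : MvPolynomial (Fin 2) ℂ) :
    (polarize f : MvPolynomial (Fin m × Fin 2) ℂ) = ∑ i : Fin m, psi i f := rfl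

lemma actOne_comp (ι : Γ →* Matrix.GeneralLinearGroup (Fin 2) ℂ) (γ δ : Γ)
    (f : MvPolynomial (Fin 2) ℂ) :
    actOne ι γ (actOne ι δ f) = actOne ι (δ * γ) f := by
  have h : (actOne ι γ).comp (actOne ι δ) = actOne ι (δ * γ) := by
    apply MvPolynomial.algHom_ext
    intro v
    simp only [AlgHom.comp_apply, actOne, aeval_X, map_sum, map_smul, map_mul,
      Units.val_mul, Matrix.mul_apply, Finset.smul_sum, smul_smul]
    rw [Finset.sum_comm]
    refine Finset.sum_congr rfl fun u _ => ?_
    rw [Finset.sum_smul]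
  exact DFunLike.congr_fun h f

lemma actWreath_psi {m : ℕ} (ι : Γ →* Matrix.GeneralLinearGroup (Fin 2) ℂ)
    (g : Fin m → Γ) (s : Equiv.Perm (Fin m)) (i : Fin m) (f : MvPolynomial (Fin 2) ℂ) :
    actWreath ι g s (psi i f) = psi (s i) (actOne ι (g i) f) := by
  have h : (actWreath ι g s).comp (psi i) = (psi (s i)).comp (actOne ι (g i)) := by
    apply MvPolynomial.algHom_ext
    intro v
    simp [actWreath, psi, actOne, map_smul]
  exact DFunLike.congr_fun h f

lemma monomial_decomp {m : ℕ} (d : (Fin m × Fin 2) →₀ ℕ) (c : ℂ) :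
    (monomial d c : MvPolynomial (Fin m × Fin 2) ℂ) =
      c • ∏ i : Fin m, psi i (∏ v : Fin 2, X v ^ d (i, v)) := by
  rw [MvPolynomial.monomial_eq, MvPolynomial.smul_eq_C_mul]
  congr 1
  rw [Finsupp.prod_fintype _ _ (fun p => pow_zero _), Fintype.prod_prod_type]
  refine Finset.prod_congr rfl fun i _ => ?_
  simp [psi]

noncomputable def T {m : ℕ} (k : ℕ) (g : Fin k → MvPolynomial (Fin 2) ℂ) :
    MvPolynomial (Fin m × Fin 2) ℂ :=
  ∑ j : Fin k ↪ Fin m, ∏ i : Fin k, psi (j i) (g i)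

lemma prod_psi_update {m k : ℕ} (j : Fin k ↪ Fin m) (G : Fin k → MvPolynomial (Fin 2) ℂ)
    (t : Fin k) (a : MvPolynomial (Fin 2) ℂ) :
    ∏ i : Fin k, psi (j i) (Function.update G t (G t * a) i) =
      psi (j t) a * ∏ i : Fin k, psi (j i) (G i) := by
  classical
  have h1 : (fun i => psi (j i) (Function.update G t (G t * a) i)) =
      Function.update (fun i => psi (j i) (G i)) t (psi (j t) (G t * a)) := by
    funext i
    rcases eq_or_ne i t with rfl | h
    · simp
    · simp [Function.update_of_ne h]
  rw [h1, Finset.prod_update_of_mem (Finset.mem_univ t), map_mul]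
  rw [← Finset.mul_prod_erase Finset.univ (fun i => psi (j i) (G i)) (Finset.mem_univ t)]
  have : Finset.univ \ {t} = Finset.univ.erase t := by
    ext x; simp [Finset.mem_erase, and_comm]
  rw [this]; ring

/-- Extend an embedding `Fin k ↪ Fin m` by one more value not in its range. -/
def snocEmb {m k : ℕ} (j : Fin k ↪ Fin m) (l : Fin m) (hl : l ∉ Set.range j) :
    Fin (k + 1) ↪ Fin m :=
  ⟨Fin.snoc j l, by
    intro a b hab
    induction a using Fin.lastCases with
    | last =>
      induction b using Fin.lastCases with
      | last => rfl
      | cast b =>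
        simp only [Fin.snoc_last, Fin.snoc_castSucc] at hab
        exact absurd ⟨b, hab.symm⟩ hl
    | cast a =>
      induction b using Fin.lastCases with
      | last =>
        simp only [Fin.snoc_last, Fin.snoc_castSucc] at hab
        exact absurd ⟨a, hab⟩ hl
      | cast b =>
        simp only [Fin.snoc_castSucc] at hab
        exact congrArg Fin.castSucc (j.injective hab)⟩

lemma T_succ {m k : ℕ} (g : Fin (k + 1) → MvPolynomial (Fin 2) ℂ) :
    (∑ l : Fin m, psi l (g (Fin.last k))) * T k (g ∘ Fin.castSucc) =
      T (k + 1) g + ∑ t : Fin k,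
        T (m := m) k (Function.update (g ∘ Fin.castSucc) t
          ((g ∘ Fin.castSucc) t * g (Fin.last k))) := by
  classical
  unfold T
  rw [Finset.sum_mul_sum, Finset.sum_comm]
  have split : ∀ j : Fin k ↪ Fin m,
      ∑ l : Fin m, psi l (g (Fin.last k)) * ∏ i : Fin k, psi (j i) ((g ∘ Fin.castSucc) i) =
      (∑ l ∈ Finset.univ.filter (fun l => l ∉ Set.range j),
        psi l (g (Fin.last k)) * ∏ i : Fin k, psi (j i) ((g ∘ Fin.castSucc) i)) +
      ∑ l ∈ Finset.univ.filter (fun l => l ∈ Set.range j),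
        psi l (g (Fin.last k)) * ∏ i : Fin k, psi (j i) ((g ∘ Fin.castSucc) i) := by
    intro j
    rw [← Finset.sum_filter_add_sum_filter_not Finset.univ (fun l => l ∉ Set.range j)]
    congr 1
    apply Finset.sum_congr _ (fun _ _ => rfl)
    ext l; simp
  simp only [split, Finset.sum_add_distrib]
  congr 1
  · -- the "new index" part gives T (k+1) g
    rw [Finset.sum_sigma']
    refine Finset.sum_bij' (i := fun p hp => snocEmb p.1 p.2 (by
        simpa using (Finset.mem_sigma.mp hp).2))
      (j := fun j' _ => ⟨⟨j' ∘ Fin.castSucc, fun a b hab => by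
          exact Fin.castSucc_injective k (j'.injective hab)⟩, j' (Fin.last k)⟩)
      ?_ ?_ ?_ ?_ ?_
    · intro p hp; exact Finset.mem_univ _
    · intro j' _
      rw [Finset.mem_sigma]
      refine ⟨Finset.mem_univ _, ?_⟩
      simp only [Finset.mem_filter, Finset.mem_univ, true_and]
      rintro ⟨a, ha⟩
      exact absurd (j'.injective ha) (Fin.castSucc_lt_last a).ne
    · intro p hp
      rcases p with ⟨j, l⟩
      apply Sigma.ext
      · apply Function.Embedding.ext
        intro i
        exact Fin.snoc_castSucc (α := fun _ => Fin m) _ _ _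
      · exact heq_of_eq (Fin.snoc_last (α := fun _ => Fin m) _ _)
    · intro j' _
      apply Function.Embedding.ext
      intro i
      induction i using Fin.lastCases with
      | last => exact Fin.snoc_last (α := fun _ => Fin m) _ _
      | cast i => exact Fin.snoc_castSucc (α := fun _ => Fin m) _ _ _
    · intro p hp
      rcases p with ⟨j, l⟩
      rw [Fin.prod_univ_castSucc]
      rw [mul_comm]
      congr 1
      · refine Finset.prod_congr rfl fun i _ => ?_
        exact congrArg (fun x => psi x _) (Fin.snoc_castSucc (α := fun _ => Fin m) _ _ _).symm
      · exact congrArg (fun x => psi x (g (Fin.last k))) (Fin.snoc_last (α := fun _ => Fin m) _ _).symm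
  · -- the "collision" part gives the merged terms
    rw [Finset.sum_comm]
    refine Finset.sum_congr rfl fun j _ => ?_
    have himg : Finset.univ.filter (fun l => l ∈ Set.range j) = Finset.univ.image j := by
      ext l; simp [eq_comm]
    rw [himg, Finset.sum_image (fun a _ b _ h => j.injective h)]
    refine Finset.sum_congr rfl fun t _ => ?_
    rw [prod_psi_update]

lemma T_mem {m : ℕ} [Fintype Γ] (ι : Γ →* Matrix.GeneralLinearGroup (Fin 2) ℂ)
    (k : ℕ) (g : Fin k → MvPolynomial (Fin 2) ℂ)
    (hg : ∀ i γ, actOne ι γ (g i) = g i) :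
    T (m := m) k g ∈ Algebra.adjoin ℂ
      {P : MvPolynomial (Fin m × Fin 2) ℂ |
        ∃ f : MvPolynomial (Fin 2) ℂ, (∀ γ : Γ, actOne ι γ f = f) ∧ P = polarize f} := by
  induction k with
  | zero =>
    unfold T
    have he : ∀ j : Fin 0 ↪ Fin m, (∏ i : Fin 0, psi (j i) (g i)) = 1 :=
      fun j => Finset.prod_of_isEmpty _
    simp only [he]
    rw [Finset.sum_const]
    exact nsmul_mem (one_mem _) _
  | succ k ih =>
    have h1 : T (m := m) (k + 1) g =
        (∑ l : Fin m, psi l (g (Fin.last k))) * T k (g ∘ Fin.castSucc) -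
        ∑ t : Fin k, T (m := m) k (Function.update (g ∘ Fin.castSucc) t
          ((g ∘ Fin.castSucc) t * g (Fin.last k))) :=
      eq_sub_of_add_eq (T_succ g).symm
    rw [h1]
    refine sub_mem (mul_mem ?_ (ih _ fun i γ => hg _ γ)) (sum_mem fun t _ => ?_)
    · exact Algebra.subset_adjoin ⟨g (Fin.last k), fun γ => hg _ γ, rfl⟩
    · refine ih _ fun i γ => ?_
      rcases eq_or_ne i t with rfl | h
      · simp only [Function.update_self, map_mul, Function.comp_apply, hg]
      · simp only [Function.update_of_ne h, Function.comp_apply, hg]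

lemma sum_perm_eq_T {m : ℕ} (F : Fin m → MvPolynomial (Fin 2) ℂ) :
    ∑ s : Equiv.Perm (Fin m), ∏ i : Fin m, psi (s i) (F i) = T m F := by
  unfold T
  refine Fintype.sum_bijective (fun s : Equiv.Perm (Fin m) => s.toEmbedding) ⟨?_, ?_⟩ _ _
    (fun s => rfl)
  · intro s t h
    exact Equiv.ext fun x => congrArg (fun e : Fin m ↪ Fin m => e x) h
  · intro j
    have hbij : Function.Bijective j := (Finite.injective_iff_bijective).mp j.injective
    exact ⟨Equiv.ofBijective j hbij, Function.Embedding.ext fun x => rfl⟩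

/-- The algebra of invariants `ℂ[x_1,…,x_m,y_1,…,y_m]^{Γ_m}` of the wreath product
`Γ_m = Γ^m ⋊ S_m` (for `Γ ⊂ GL_2(ℂ)` finite, acting diagonally) is generated by the
polynomials `Σ_{i=1}^m f(x_i,y_i)` with `f ∈ ℂ[x,y]^Γ` (equivalently, with `f` running
over a linear basis of `ℂ[x,y]^Γ`). -/
theorem invariants_generated_by_polarized {m : ℕ} [Fintype Γ]
    (ι : Γ →* Matrix.GeneralLinearGroup (Fin 2) ℂ) (hι : Function.Injective ι) :
    (Algebra.adjoin ℂ
        {P : MvPolynomial (Fin m × Fin 2) ℂ |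
          ∃ f : MvPolynomial (Fin 2) ℂ, (∀ γ : Γ, actOne ι γ f = f) ∧ P = polarize f} :
      Set (MvPolynomial (Fin m × Fin 2) ℂ)) =
    {P | ∀ (g : Fin m → Γ) (s : Equiv.Perm (Fin m)), actWreath ι g s P = P} := by
  classical
  set Adj := Algebra.adjoin ℂ
      {P : MvPolynomial (Fin m × Fin 2) ℂ |
        ∃ f : MvPolynomial (Fin 2) ℂ, (∀ γ : Γ, actOne ι γ f = f) ∧ P = polarize f} with hAdj
  apply Set.Subset.antisymm
  · -- every element of the adjoin is invariant
    set Inv : Subalgebra ℂ (MvPolynomial (Fin m × Fin 2) ℂ) :=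
      ⨅ (g : Fin m → Γ), ⨅ (s : Equiv.Perm (Fin m)),
        AlgHom.equalizer (actWreath ι g s) (AlgHom.id ℂ _) with hInv
    have hmemInv : ∀ Q, Q ∈ Inv ↔ ∀ g s, actWreath ι g s Q = Q := by
      intro Q
      simp [hInv, Algebra.mem_iInf, AlgHom.mem_equalizer]
    have hle : Adj ≤ Inv := by
      apply Algebra.adjoin_le
      rintro Q ⟨f, hf, rfl⟩
      rw [SetLike.mem_coe, hmemInv]
      intro g s
      rw [polarize_eq, map_sum]
      simp only [actWreath_psi, hf]
      exact Equiv.sum_comp s fun i => psi i f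
    intro P hP
    exact (hmemInv P).mp (hle hP)
  · intro P hP
    simp only [Set.mem_setOf_eq] at hP
    rw [SetLike.mem_coe]
    -- the averaged sum lies in the adjoin
    have key : ∀ (d : (Fin m × Fin 2) →₀ ℕ) (c : ℂ),
        (∑ s : Equiv.Perm (Fin m), ∑ g : Fin m → Γ,
          actWreath ι g s (monomial d c)) ∈ Adj := by
      intro d c
      simp only [monomial_decomp, map_smul, ← Finset.smul_sum]
      apply Subalgebra.smul_mem
      have h2 : ∀ (s : Equiv.Perm (Fin m)) (g : Fin m → Γ),
          actWreath ι g s (∏ i : Fin m, psi i (∏ v : Fin 2, X v ^ d (i, v))) =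
          ∏ i : Fin m, psi (s i) (actOne ι (g i) (∏ v : Fin 2, X v ^ d (i, v))) := by
        intro s g
        rw [map_prod]
        exact Finset.prod_congr rfl fun i _ => actWreath_psi ι g s i _
      simp only [h2]
      have h3 : ∀ s : Equiv.Perm (Fin m),
          (∑ g : Fin m → Γ, ∏ i : Fin m,
            psi (s i) (actOne ι (g i) (∏ v : Fin 2, X v ^ d (i, v)))) =
          ∏ i : Fin m, psi (s i) (∑ γ : Γ, actOne ι γ (∏ v : Fin 2, X v ^ d (i, v))) := by
        intro s
        symm
        rw [show (∏ i : Fin m, psi (s i) (∑ γ : Γ, actOne ι γ (∏ v : Fin 2, X v ^ d (i, v)))) =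
            ∏ i : Fin m, ∑ γ : Γ, psi (s i) (actOne ι γ (∏ v : Fin 2, X v ^ d (i, v)))
          from Finset.prod_congr rfl fun i _ => map_sum _ _ _]
        rw [Finset.prod_univ_sum, Fintype.piFinset_univ]
      simp only [h3]
      rw [sum_perm_eq_T]
      apply T_mem
      intro i γ
      rw [map_sum]
      simp only [actOne_comp]
      exact Equiv.sum_comp (Equiv.mulRight γ) fun δ => actOne ι δ _
    have hsum : (∑ s : Equiv.Perm (Fin m), ∑ g : Fin m → Γ, actWreath ι g s P) ∈ Adj := by
      have hexp : ∀ (s : Equiv.Perm (Fin m)) (g : Fin m → Γ),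
          actWreath ι g s P =
            ∑ d ∈ P.support, actWreath ι g s (monomial d (coeff d P)) := by
        intro s g
        conv_lhs => rw [P.as_sum]
        rw [map_sum]
      simp only [hexp]
      have hswap : (∑ s : Equiv.Perm (Fin m), ∑ g : Fin m → Γ, ∑ d ∈ P.support,
            actWreath ι g s (monomial d (coeff d P))) =
          ∑ d ∈ P.support, ∑ s : Equiv.Perm (Fin m), ∑ g : Fin m → Γ,
            actWreath ι g s (monomial d (coeff d P)) :=
        (Finset.sum_congr rfl fun s _ => Finset.sum_comm).trans Finset.sum_comm
      rw [hswap]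
      exact Subalgebra.sum_mem _ fun d _ => key d _
    have hN : (∑ s : Equiv.Perm (Fin m), ∑ g : Fin m → Γ, actWreath ι g s P) =
        (Fintype.card (Equiv.Perm (Fin m)) * Fintype.card (Fin m → Γ)) • P := by
      simp only [hP, Finset.sum_const, Finset.card_univ, smul_smul]
    have hNe : ((Fintype.card (Equiv.Perm (Fin m)) * Fintype.card (Fin m → Γ) : ℕ) : ℂ) ≠ 0 :=
      Nat.cast_ne_zero.mpr (Nat.mul_ne_zero Fintype.card_ne_zero Fintype.card_ne_zero)
    have hPeq : P = ((Fintype.card (Equiv.Perm (Fin m)) * Fintype.card (Fin m → Γ) : ℕ) : ℂ)⁻¹ •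
        (∑ s : Equiv.Perm (Fin m), ∑ g : Fin m → Γ, actWreath ι g s P) := by
      rw [hN, ← Nat.cast_smul_eq_nsmul ℂ, inv_smul_smul₀ hNe]
    rw [hPeq]
    exact Subalgebra.smul_mem _ hsum _
end
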